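/- For every single-sink network N there exists a constant L > 0, namely L = Σ_{e∈E} max{1, L_e} with L_e = (Σ_{e'∈δ⁻(v_e)} ν_{e'} + max_ζ u_{v_e}(ζ))/ν_e where v_e is the tail of e, such that for every feasible flow over time f in N: each instantaneous travel time function c_e is Lipschitz continuous on ℝ≥0 with constant max{1, L_e}, and each node label function ℓ_v is Lipschitz continuous on ℝ≥0 with constant L. -/

import Mathlib

open MeasureTheory Set

/-- A walk in a directed graph given by `tail`/`head` maps: `IsWalk tail head v w L`
means the list of edges `L` forms a walk from `v` to `w`. -/
def IsWalk {V E : Type} (tail head : E → V) : V → V → List E → Prop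
  | v, w, [] => v = w
  | v, w, e :: L => tail e = v ∧ IsWalk tail head (head e) w L

/-- A right-constant step function with finitely many jump points. -/
def RightConstantStep (g : ℝ → ℝ) : Prop :=
  ∃ s : Finset ℝ, ∀ x y : ℝ, x ≤ y → (∀ p ∈ s, ¬ (x < p ∧ p ≤ y)) → g x = g y

/-- A single-sink network: a finite directed graph with positive rational capacities
and travel times, a sink reachable from every node, and nonnegative rational-valued
right-constant step network inflow rates (zero at the sink and for negative times). -/
structure Network (V E : Type) [Fintype V] [DecidableEq V] [Fintype E] [DecidableEq E] where
  tail : E → V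
  head : E → V
  cap : E → ℝ
  time : E → ℝ
  sink : V
  u : V → ℝ → ℝ
  cap_pos : ∀ e, 0 < cap e
  cap_rat : ∀ e, ∃ q : ℚ, cap e = (q : ℝ)
  time_pos : ∀ e, 0 < time e
  time_rat : ∀ e, ∃ q : ℚ, time e = (q : ℝ)
  reach : ∀ v, ∃ L : List E, IsWalk tail head v sink L
  u_nonneg : ∀ v θ, 0 ≤ u v θ
  u_rat : ∀ v θ, ∃ q : ℚ, u v θ = (q : ℝ)
  u_sink : ∀ θ, u sink θ = 0
  u_neg : ∀ v θ, θ < 0 → u v θ = 0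
  u_step : ∀ v, RightConstantStep (u v)

variable {V E : Type} [Fintype V] [DecidableEq V] [Fintype E] [DecidableEq E]

/-- The edges leaving a node `v`, i.e. `δ⁺(v)`. -/
def Network.outEdges (N : Network V E) (v : V) : Finset E :=
  Finset.univ.filter (fun e => N.tail e = v)

/-- The edges entering a node `v`, i.e. `δ⁻(v)`. -/
def Network.inEdges (N : Network V E) (v : V) : Finset E :=
  Finset.univ.filter (fun e => N.head e = v)

/-- `τ_min`, the minimal travel time of an edge. -/
noncomputable def Network.tauMin (N : Network V E) : ℝ := sInf (Set.range N.time)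

/-- `max_ζ u_v(ζ)`, the maximal network inflow rate at `v`. -/
noncomputable def Network.uMax (N : Network V E) (v : V) : ℝ := ⨆ θ : ℝ, N.u v θ

/-- The maximal out-degree `Δ` of the network. -/
def Network.maxOutDeg (N : Network V E) : ℕ :=
  Finset.univ.sup (fun v => (N.outEdges v).card)

/-- All network inflow rates have bounded support. -/
def Network.BddInflow (N : Network V E) : Prop :=
  ∀ v, ∃ B : ℝ, ∀ θ, B ≤ θ → N.u v θ = 0

/-- The directed graph of the network is acyclic. -/
def Network.Acyclic (N : Network V E) : Prop :=
  ∀ (v : V) (L : List E), L ≠ [] → ¬ IsWalk N.tail N.head v v L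

/-- A flow over time: locally integrable nonnegative edge in- and outflow rates. -/
structure FlowOverTime (N : Network V E) where
  fplus : E → ℝ → ℝ
  fminus : E → ℝ → ℝ
  fplus_nonneg : ∀ e θ, 0 ≤ fplus e θ
  fminus_nonneg : ∀ e θ, 0 ≤ fminus e θ
  fplus_int : ∀ e θ, IntervalIntegrable (fplus e) volume 0 θ
  fminus_int : ∀ e θ, IntervalIntegrable (fminus e) volume 0 θ

/-- The queue length `q_e(θ) = F⁺_e(θ) − F⁻_e(θ + τ_e)`. -/
noncomputable def queueOf (N : Network V E) (fplus fminus : E → ℝ → ℝ) (e : E) (θ : ℝ) : ℝ :=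
  (∫ ζ in (0:ℝ)..θ, fplus e ζ) - ∫ ζ in (0:ℝ)..(θ + N.time e), fminus e ζ

/-- The instantaneous travel time `c_e(θ) = τ_e + q_e(θ)/ν_e`. -/
noncomputable def ctimeOf (N : Network V E) (fplus fminus : E → ℝ → ℝ) (e : E) (θ : ℝ) : ℝ :=
  N.time e + queueOf N fplus fminus e θ / N.cap e

/-- The node label `ℓ_v(θ)`: the shortest instantaneous travel time from `v` to the sink. -/
noncomputable def labelOf (N : Network V E) (fplus fminus : E → ℝ → ℝ) (v : V) (θ : ℝ) : ℝ :=
  sInf { r : ℝ | ∃ L : List E, IsWalk N.tail N.head v N.sink L ∧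
                  r = (L.map (fun e => ctimeOf N fplus fminus e θ)).sum }

/-- Edge `e` is active at time `θ`: `ℓ_{tail e}(θ) = c_e(θ) + ℓ_{head e}(θ)`. -/
def ActiveOf (N : Network V E) (fplus fminus : E → ℝ → ℝ) (e : E) (θ : ℝ) : Prop :=
  labelOf N fplus fminus (N.tail e) θ =
    ctimeOf N fplus fminus e θ + labelOf N fplus fminus (N.head e) θ

/-- Feasibility of a flow over time: flow conservation (i)/(ii), no outflow before `τ_e`
(iii), and queues operating at capacity (iv). -/
def Feasible (N : Network V E) (f : FlowOverTime N) : Prop :=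
  (∀ v, v ≠ N.sink → ∀ θ : ℝ, 0 ≤ θ →
      (∑ e ∈ N.outEdges v, f.fplus e θ) - (∑ e ∈ N.inEdges v, f.fminus e θ) = N.u v θ) ∧
  (∀ θ : ℝ, 0 ≤ θ →
      (∑ e ∈ N.outEdges N.sink, f.fplus e θ) - (∑ e ∈ N.inEdges N.sink, f.fminus e θ) ≤ 0) ∧
  (∀ e, ∀ θ : ℝ, 0 ≤ θ → θ < N.time e → f.fminus e θ = 0) ∧
  (∀ e, ∀ θ : ℝ, 0 ≤ θ →
      f.fminus e (θ + N.time e) =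
        if 0 < queueOf N f.fplus f.fminus e θ then N.cap e
        else min (f.fplus e θ) (N.cap e))

/-- An instantaneous dynamic equilibrium: a feasible flow that only sends flow
into currently active edges. -/
def IsIDE (N : Network V E) (f : FlowOverTime N) : Prop :=
  Feasible N f ∧
  ∀ e, ∀ θ : ℝ, 0 ≤ θ → 0 < f.fplus e θ → ActiveOf N f.fplus f.fminus e θ

/-- `g` is almost everywhere constant on the set `S`. -/
def AEConstOn (g : ℝ → ℝ) (S : Set ℝ) : Prop :=
  ∃ c : ℝ, ∀ᵐ θ ∂(volume.restrict S), g θ = c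

/-- The `i`-th segment of the partition `0 = t 0 < t 1 < ⋯ < t n < ∞`. -/
def phaseSeg (n : ℕ) (t : ℕ → ℝ) (i : ℕ) : Set ℝ :=
  if i < n then Set.Ioo (t i) (t (i+1)) else Set.Ioi (t n)

/-- `ℝ≥0` splits (up to finitely many points) into the `n+1` intervals given by
`t`, on each of which all edge in- and outflow rates are a.e. constant; i.e. the
flow has at most `n+1` phases. -/
def PhasePartition (N : Network V E) (f : FlowOverTime N) (n : ℕ) (t : ℕ → ℝ) : Prop :=
  t 0 = 0 ∧ (∀ i, i < n → t i < t (i+1)) ∧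
  ∀ i, i ≤ n → ∀ e, AEConstOn (f.fplus e) (phaseSeg n t i) ∧ AEConstOn (f.fminus e) (phaseSeg n t i)


section AuxWalk

variable {V E : Type}

lemma isWalk_nil {t h : E → V} {v w : V} : IsWalk t h v w [] ↔ v = w := Iff.rfl

lemma isWalk_cons {t h : E → V} {v w : V} {e : E} {L : List E} :
    IsWalk t h v w (e :: L) ↔ t e = v ∧ IsWalk t h (h e) w L := Iff.rfl

lemma isWalk_append {t h : E → V} {v w : V} {A B : List E} :
    IsWalk t h v w (A ++ B) ↔ ∃ m, IsWalk t h v m A ∧ IsWalk t h m w B := by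
  induction A generalizing v with
  | nil =>
    simp only [List.nil_append, isWalk_nil]
    constructor
    · intro hw; exact ⟨v, rfl, hw⟩
    · rintro ⟨m, rfl, hw⟩; exact hw
  | cons e A ih =>
    simp only [List.cons_append, isWalk_cons, ih]
    constructor
    · rintro ⟨hte, m, h1, h2⟩; exact ⟨m, ⟨hte, h1⟩, h2⟩
    · rintro ⟨m, ⟨hte, h1⟩, h2⟩; exact ⟨hte, m, h1, h2⟩

lemma exists_dup_decomp {α : Type*} {l : List α} (h : ¬ l.Nodup) :
    ∃ (A : List α) (x : α) (B C : List α), l = A ++ x :: (B ++ x :: C) := by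
  induction l with
  | nil => exact absurd List.nodup_nil h
  | cons a l ih =>
    by_cases ha : a ∈ l
    · obtain ⟨B, C, rfl⟩ := List.append_of_mem ha
      exact ⟨[], a, B, C, rfl⟩
    · have hnd : ¬ l.Nodup := by
        intro hnd; exact h (List.nodup_cons.mpr ⟨ha, hnd⟩)
      obtain ⟨A, x, B, C, rfl⟩ := ih hnd
      exact ⟨a :: A, x, B, C, rfl⟩

lemma exists_nodup_walk_le {t h : E → V} (c : E → ℝ) (hc : ∀ e, 0 ≤ c e) :
    ∀ (n : ℕ) (v w : V) (L : List E), L.length ≤ n → IsWalk t h v w L →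
    ∃ L' : List E, L'.Nodup ∧ IsWalk t h v w L' ∧ (L'.map c).sum ≤ (L.map c).sum := by
  intro n
  induction n with
  | zero =>
    intro v w L hL hw
    rw [List.length_eq_zero_iff.mp (Nat.le_zero.mp hL)] at hw ⊢
    exact ⟨[], List.nodup_nil, hw, le_rfl⟩
  | succ n ih =>
    intro v w L hL hw
    by_cases hnd : L.Nodup
    · exact ⟨L, hnd, hw, le_rfl⟩
    · obtain ⟨A, x, B, C, rfl⟩ := exists_dup_decomp hnd
      rw [isWalk_append] at hw
      obtain ⟨m, hA, hx⟩ := hw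
      rw [isWalk_cons] at hx
      obtain ⟨hxm, hBC⟩ := hx
      rw [isWalk_append] at hBC
      obtain ⟨m2, hB, hxC⟩ := hBC
      rw [isWalk_cons] at hxC
      obtain ⟨hxm2, hC⟩ := hxC
      have hw' : IsWalk t h v w (A ++ x :: C) :=
        isWalk_append.mpr ⟨m, hA, isWalk_cons.mpr ⟨hxm, hC⟩⟩
      have hlen : (A ++ x :: C).length ≤ n := by
        simp only [List.length_append, List.length_cons] at hL ⊢
        omega
      obtain ⟨L', h1, h2, h3⟩ := ih v w _ hlen hw'
      refine ⟨L', h1, h2, h3.trans ?_⟩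
      have hBsum : 0 ≤ (B.map c).sum := by
        apply List.sum_nonneg
        intro y hy
        obtain ⟨e, _, rfl⟩ := List.mem_map.mp hy
        exact hc e
      simp only [List.map_append, List.map_cons, List.sum_append, List.sum_cons]
      have := hc x
      linarith

end AuxWalk

section AuxNet

variable {V E : Type} [Fintype V] [DecidableEq V] [Fintype E] [DecidableEq E]

lemma Network.uMax_bddAbove (N : Network V E) (v : V) : BddAbove (Set.range (N.u v)) := by
  obtain ⟨s, hs⟩ := N.u_step v
  have hsub : Set.range (N.u v) ⊆ (N.u v '' ↑s) ∪ {0} := by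
    rintro _ ⟨x, rfl⟩
    by_cases hne : (s.filter (fun p => p ≤ x)).Nonempty
    · left
      set p := (s.filter (fun p => p ≤ x)).max' hne with hp
      have hpmem : p ∈ s ∧ p ≤ x := by
        have := (s.filter (fun p => p ≤ x)).max'_mem hne
        rw [Finset.mem_filter] at this
        exact this
      refine ⟨p, hpmem.1, ?_⟩
      apply hs p x hpmem.2
      rintro q hq ⟨h1, h2⟩
      have hqmem : q ∈ s.filter (fun p => p ≤ x) := Finset.mem_filter.mpr ⟨hq, h2⟩
      exact absurd (Finset.le_max' _ q hqmem) (not_le.mpr h1)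
    · right
      by_cases hx : x < 0
      · simp [N.u_neg v x hx]
      · push_neg at hx
        have h0 : N.u v (-1) = N.u v x := by
          apply hs _ _ (by linarith)
          rintro p hp ⟨h1, h2⟩
          exact hne ⟨p, Finset.mem_filter.mpr ⟨hp, h2⟩⟩
        have hneg1 := N.u_neg v (-1) (by norm_num)
        simp [← h0, hneg1]
  exact (((s.finite_toSet.image _).union (Set.finite_singleton 0)).bddAbove).mono hsub

lemma Network.le_uMax (N : Network V E) (v : V) (θ : ℝ) : N.u v θ ≤ N.uMax v :=
  le_ciSup (N.uMax_bddAbove v) θ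

lemma Network.uMax_nonneg (N : Network V E) (v : V) : 0 ≤ N.uMax v :=
  (N.u_nonneg v 0).trans (N.le_uMax v 0)

lemma intInt_fplus (N : Network V E) (f : FlowOverTime N) (e : E) (a b : ℝ) :
    IntervalIntegrable (f.fplus e) volume a b :=
  (f.fplus_int e a).symm.trans (f.fplus_int e b)

lemma intInt_fminus (N : Network V E) (f : FlowOverTime N) (e : E) (a b : ℝ) :
    IntervalIntegrable (f.fminus e) volume a b :=
  (f.fminus_int e a).symm.trans (f.fminus_int e b)

lemma intInt_fminus_shift (N : Network V E) (f : FlowOverTime N) (e : E) (a b : ℝ) :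
    IntervalIntegrable (fun ζ => f.fminus e (ζ + N.time e)) volume a b := by
  have := (intInt_fminus N f e (a + N.time e) (b + N.time e)).comp_add_right (N.time e)
  simpa using this

lemma fminus_le (N : Network V E) (f : FlowOverTime N) (hf : Feasible N f) (e : E)
    (θ : ℝ) (hθ : 0 ≤ θ) : f.fminus e θ ≤ N.cap e := by
  by_cases h : θ < N.time e
  · rw [hf.2.2.1 e θ hθ h]; exact (N.cap_pos e).le
  · push_neg at h
    have h2 := hf.2.2.2 e (θ - N.time e) (by linarith)
    rw [sub_add_cancel] at h2
    rw [h2]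
    split_ifs
    · exact le_rfl
    · exact min_le_right _ _

lemma fplus_le (N : Network V E) (f : FlowOverTime N) (hf : Feasible N f) (e : E)
    (θ : ℝ) (hθ : 0 ≤ θ) :
    f.fplus e θ ≤ (∑ e' ∈ N.inEdges (N.tail e), N.cap e') + N.uMax (N.tail e) := by
  have hmem : e ∈ N.outEdges (N.tail e) := by
    simp [Network.outEdges]
  have h1 : f.fplus e θ ≤ ∑ e' ∈ N.outEdges (N.tail e), f.fplus e' θ :=
    Finset.single_le_sum (fun i _ => f.fplus_nonneg i θ) hmem
  have h2 : ∑ e' ∈ N.inEdges (N.tail e), f.fminus e' θ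
      ≤ ∑ e' ∈ N.inEdges (N.tail e), N.cap e' :=
    Finset.sum_le_sum fun i _ => fminus_le N f hf i θ hθ
  by_cases hv : N.tail e = N.sink
  · have h3 := hf.2.1 θ hθ
    rw [← hv] at h3
    have h4 := N.uMax_nonneg (N.tail e)
    linarith
  · have h3 := hf.1 _ hv θ hθ
    have h4 := N.le_uMax (N.tail e) θ
    linarith

lemma queue_continuous (N : Network V E) (f : FlowOverTime N) (e : E) :
    Continuous (queueOf N f.fplus f.fminus e) := by
  unfold queueOf
  apply Continuous.sub
  · exact intervalIntegral.continuous_primitive (fun a b => intInt_fplus N f e a b) 0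
  · exact (intervalIntegral.continuous_primitive (fun a b => intInt_fminus N f e a b) 0).comp
      (continuous_id.add continuous_const)

lemma queue_sub (N : Network V E) (f : FlowOverTime N) (e : E) (a b : ℝ) :
    queueOf N f.fplus f.fminus e b - queueOf N f.fplus f.fminus e a =
      (∫ ζ in a..b, f.fplus e ζ) - ∫ ζ in a..b, f.fminus e (ζ + N.time e) := by
  unfold queueOf
  rw [intervalIntegral.integral_comp_add_right (fun x => f.fminus e x) (N.time e)]
  have h1 := intervalIntegral.integral_add_adjacent_intervals
    (intInt_fplus N f e 0 a) (intInt_fplus N f e a b)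
  have h2 := intervalIntegral.integral_add_adjacent_intervals
    (intInt_fminus N f e 0 (a + N.time e)) (intInt_fminus N f e (a + N.time e) (b + N.time e))
  linarith

lemma queue_nonneg (N : Network V E) (f : FlowOverTime N) (hf : Feasible N f) (e : E)
    (θ : ℝ) (hθ : 0 ≤ θ) : 0 ≤ queueOf N f.fplus f.fminus e θ := by
  by_contra hneg
  push_neg at hneg
  set q := queueOf N f.fplus f.fminus e with hqdef
  have hcont : Continuous q := queue_continuous N f e
  have hq0 : q 0 = 0 := by
    have hz : ∫ ζ in (0:ℝ)..(N.time e), f.fminus e ζ = 0 := by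
      rw [intervalIntegral.integral_congr_ae (g := fun _ => (0:ℝ))]
      · simp
      · filter_upwards [compl_mem_ae_iff.mpr (measure_singleton (N.time e))] with x hx hmem
        rw [Set.uIoc_of_le (N.time_pos e).le] at hmem
        have hxne : x ≠ N.time e := by simpa using hx
        exact hf.2.2.1 e x hmem.1.le (lt_of_le_of_ne hmem.2 hxne)
    simp [hqdef, queueOf, hz]
  have hθpos : 0 < θ := by
    rcases lt_or_eq_of_le hθ with h | h
    · exact h
    · rw [← h, hq0] at hneg; linarith
  set S := Set.Icc (0:ℝ) θ ∩ q ⁻¹' Set.Ici 0 with hSdef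
  have hScpt : IsCompact S := isCompact_Icc.inter_right (isClosed_Ici.preimage hcont)
  have hSne : S.Nonempty := ⟨0, ⟨le_rfl, hθpos.le⟩, by simp [hq0]⟩
  set θ₁ := sSup S with hθ₁def
  have hθ₁mem : θ₁ ∈ S := hScpt.sSup_mem hSne
  have hθ₁nonneg : 0 ≤ θ₁ := hθ₁mem.1.1
  have hθ₁le : θ₁ ≤ θ := hθ₁mem.1.2
  have hqθ₁ : 0 ≤ q θ₁ := hθ₁mem.2
  have hθ₁lt : θ₁ < θ := by
    rcases lt_or_eq_of_le hθ₁le with h | h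
    · exact h
    · rw [h] at hqθ₁; linarith
  have hlt : ∀ ζ, θ₁ < ζ → ζ ≤ θ → q ζ < 0 := by
    intro ζ h1 h2
    by_contra hge
    push_neg at hge
    have hmem : ζ ∈ S := ⟨⟨le_trans hθ₁nonneg h1.le, h2⟩, hge⟩
    exact absurd (le_csSup hScpt.bddAbove hmem) (not_le.mpr h1)
  have hq₁le : q θ₁ ≤ 0 := by
    have ht : Filter.Tendsto q (nhdsWithin θ₁ (Set.Ioi θ₁)) (nhds (q θ₁)) :=
      (hcont.tendsto θ₁).mono_left nhdsWithin_le_nhds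
    apply le_of_tendsto ht
    filter_upwards [Ioo_mem_nhdsGT_of_mem (Set.mem_Ico.mpr ⟨le_rfl, hθ₁lt⟩)] with ζ hζ
    exact (hlt ζ hζ.1 hζ.2.le).le
  have hle : ∀ ζ ∈ Set.Icc θ₁ θ, f.fminus e (ζ + N.time e) ≤ f.fplus e ζ := by
    intro ζ hζ
    have h0ζ : 0 ≤ ζ := le_trans hθ₁nonneg hζ.1
    have hqζ : ¬ 0 < q ζ := by
      rcases eq_or_lt_of_le hζ.1 with h | h
      · rw [← h]; exact not_lt.mpr hq₁le
      · exact not_lt.mpr (hlt ζ h hζ.2).le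
    have h4 := hf.2.2.2 e ζ h0ζ
    rw [if_neg hqζ] at h4
    rw [h4]
    exact min_le_left _ _
  have hmono : (∫ ζ in θ₁..θ, f.fminus e (ζ + N.time e)) ≤ ∫ ζ in θ₁..θ, f.fplus e ζ :=
    intervalIntegral.integral_mono_on hθ₁lt.le (intInt_fminus_shift N f e θ₁ θ)
      (intInt_fplus N f e θ₁ θ) hle
  have hsub := queue_sub N f e θ₁ θ
  rw [← hqdef] at hsub
  linarith

lemma queue_lip (N : Network V E) (f : FlowOverTime N) (hf : Feasible N f) (e : E)
    {a b : ℝ} (ha : 0 ≤ a) (hab : a ≤ b) :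
    |queueOf N f.fplus f.fminus e b - queueOf N f.fplus f.fminus e a| ≤
      max ((∑ e' ∈ N.inEdges (N.tail e), N.cap e') + N.uMax (N.tail e)) (N.cap e) * (b - a) := by
  set A := (∑ e' ∈ N.inEdges (N.tail e), N.cap e') + N.uMax (N.tail e) with hA
  rw [queue_sub]
  have h1 : 0 ≤ ∫ ζ in a..b, f.fplus e ζ :=
    intervalIntegral.integral_nonneg hab (fun u _ => f.fplus_nonneg e u)
  have h2 : (∫ ζ in a..b, f.fplus e ζ) ≤ A * (b - a) := by
    calc (∫ ζ in a..b, f.fplus e ζ)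
        ≤ ∫ _ζ in a..b, A := intervalIntegral.integral_mono_on hab (intInt_fplus N f e a b)
            intervalIntegrable_const
            (fun u hu => by rw [hA]; exact fplus_le N f hf e u (le_trans ha hu.1))
      _ = A * (b - a) := by rw [intervalIntegral.integral_const, smul_eq_mul, mul_comm]
  have h3 : 0 ≤ ∫ ζ in a..b, f.fminus e (ζ + N.time e) :=
    intervalIntegral.integral_nonneg hab (fun u _ => f.fminus_nonneg e _)
  have h4 : (∫ ζ in a..b, f.fminus e (ζ + N.time e)) ≤ N.cap e * (b - a) := by
    calc (∫ ζ in a..b, f.fminus e (ζ + N.time e))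
        ≤ ∫ _ζ in a..b, N.cap e := intervalIntegral.integral_mono_on hab
            (intInt_fminus_shift N f e a b) intervalIntegrable_const
            (fun u hu => fminus_le N f hf e (u + N.time e)
              (by have h5 := N.time_pos e; have h6 := hu.1; linarith))
      _ = N.cap e * (b - a) := by rw [intervalIntegral.integral_const, smul_eq_mul, mul_comm]
  have hba : (0:ℝ) ≤ b - a := by linarith
  have hmA : A * (b - a) ≤ max A (N.cap e) * (b - a) :=
    mul_le_mul_of_nonneg_right (le_max_left _ _) hba
  have hmc : N.cap e * (b - a) ≤ max A (N.cap e) * (b - a) :=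
    mul_le_mul_of_nonneg_right (le_max_right _ _) hba
  rw [abs_le]
  constructor <;> linarith

lemma ctime_nonneg (N : Network V E) (f : FlowOverTime N) (hf : Feasible N f) (e : E)
    (θ : ℝ) (hθ : 0 ≤ θ) : 0 ≤ ctimeOf N f.fplus f.fminus e θ :=
  add_nonneg (N.time_pos e).le
    (div_nonneg (queue_nonneg N f hf e θ hθ) (N.cap_pos e).le)

lemma ctime_lip (N : Network V E) (f : FlowOverTime N) (hf : Feasible N f) (e : E)
    (θ θ' : ℝ) (hθ : 0 ≤ θ) (hθ' : 0 ≤ θ') :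
    |ctimeOf N f.fplus f.fminus e θ - ctimeOf N f.fplus f.fminus e θ'| ≤
      max 1 (((∑ e' ∈ N.inEdges (N.tail e), N.cap e') + N.uMax (N.tail e)) / N.cap e)
        * |θ - θ'| := by
  set A := (∑ e' ∈ N.inEdges (N.tail e), N.cap e') + N.uMax (N.tail e) with hA
  have hcap := N.cap_pos e
  have key : max 1 (A / N.cap e) * N.cap e = max A (N.cap e) := by
    rw [max_comm, ← div_self hcap.ne', max_div_div_right hcap.le,
      div_mul_cancel₀ _ hcap.ne']
  have main : ∀ a b : ℝ, 0 ≤ a → a ≤ b →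
      |ctimeOf N f.fplus f.fminus e b - ctimeOf N f.fplus f.fminus e a| ≤
        max 1 (A / N.cap e) * (b - a) := by
    intro a b ha hab
    have hq := queue_lip N f hf e ha hab
    have hdiff : ctimeOf N f.fplus f.fminus e b - ctimeOf N f.fplus f.fminus e a
        = (queueOf N f.fplus f.fminus e b - queueOf N f.fplus f.fminus e a) / N.cap e := by
      unfold ctimeOf
      field_simp
      ring
    rw [hdiff, abs_div, abs_of_pos hcap, div_le_iff₀ hcap]
    calc |queueOf N f.fplus f.fminus e b - queueOf N f.fplus f.fminus e a|
        ≤ max A (N.cap e) * (b - a) := hq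
      _ = max 1 (A / N.cap e) * (b - a) * N.cap e := by rw [← key]; ring
  rcases le_total θ' θ with h | h
  · have := main θ' θ hθ' h
    rwa [abs_of_nonneg (sub_nonneg.mpr h)]
  · have h2 := main θ θ' hθ h
    rw [abs_sub_comm, abs_sub_comm θ θ']
    rwa [abs_of_nonneg (sub_nonneg.mpr h)]

end AuxNet

/-- For every single-sink network there is a constant `L > 0`, namely
`L = Σ_{e∈E} max{1, L_e}` with `L_e = (Σ_{e'∈δ⁻(tail e)} ν_{e'} + max_ζ u_{tail e}(ζ))/ν_e`,
such that for every feasible flow over time each instantaneous travel time `c_e` is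
Lipschitz on `ℝ≥0` with constant `max{1, L_e}` and each node label `ℓ_v` is Lipschitz on
`ℝ≥0` with constant `L`. -/
theorem labels_lipschitz
    {V E : Type} [Fintype V] [DecidableEq V] [Fintype E] [DecidableEq E] [Nonempty E]
    (N : Network V E) (hbdd : N.BddInflow) :
    ∃ L : ℝ, 0 < L ∧
      L = ∑ e : E, max 1
            (((∑ e' ∈ N.inEdges (N.tail e), N.cap e') + N.uMax (N.tail e)) / N.cap e) ∧
      ∀ f : FlowOverTime N, Feasible N f →
        (∀ e : E, ∀ θ θ' : ℝ, 0 ≤ θ → 0 ≤ θ' →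
          |ctimeOf N f.fplus f.fminus e θ - ctimeOf N f.fplus f.fminus e θ'|
            ≤ max 1 (((∑ e' ∈ N.inEdges (N.tail e), N.cap e') + N.uMax (N.tail e)) / N.cap e)
                * |θ - θ'|) ∧
        (∀ v : V, ∀ θ θ' : ℝ, 0 ≤ θ → 0 ≤ θ' →
          |labelOf N f.fplus f.fminus v θ - labelOf N f.fplus f.fminus v θ'| ≤ L * |θ - θ'|) := by
  classical
  set K : E → ℝ := fun e =>
    max 1 (((∑ e' ∈ N.inEdges (N.tail e), N.cap e') + N.uMax (N.tail e)) / N.cap e) with hK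
  have hK1 : ∀ e, (1:ℝ) ≤ K e := fun e => le_max_left _ _
  have hK0 : ∀ e, (0:ℝ) ≤ K e := fun e => le_trans zero_le_one (hK1 e)
  refine ⟨∑ e : E, K e, ?_, rfl, ?_⟩
  · exact Finset.sum_pos (fun e _ => lt_of_lt_of_le one_pos (hK1 e)) Finset.univ_nonempty
  intro f hf
  constructor
  · intro e θ θ' hθ hθ'
    exact ctime_lip N f hf e θ θ' hθ hθ'
  · intro v θ θ' hθ hθ'
    set c : ℝ → E → ℝ := fun ζ e => ctimeOf N f.fplus f.fminus e ζ with hc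
    have hbddS : ∀ ζ : ℝ, 0 ≤ ζ → BddBelow { r : ℝ | ∃ L : List E,
        IsWalk N.tail N.head v N.sink L ∧ r = (L.map (c ζ)).sum } := by
      intro ζ hζ
      refine ⟨0, ?_⟩
      rintro r ⟨L, hw, rfl⟩
      apply List.sum_nonneg
      intro x hx
      obtain ⟨e, _, rfl⟩ := List.mem_map.mp hx
      exact ctime_nonneg N f hf e ζ hζ
    have hneS : ∀ ζ : ℝ, { r : ℝ | ∃ L : List E,
        IsWalk N.tail N.head v N.sink L ∧ r = (L.map (c ζ)).sum }.Nonempty := by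
      intro ζ
      obtain ⟨L, hL⟩ := N.reach v
      exact ⟨_, L, hL, rfl⟩
    have main : ∀ a b : ℝ, 0 ≤ a → 0 ≤ b →
        labelOf N f.fplus f.fminus v b ≤
          labelOf N f.fplus f.fminus v a + (∑ e : E, K e) * |b - a| := by
      intro a b ha hb
      apply le_of_forall_pos_le_add
      intro ε hε
      have hlt : sInf { r : ℝ | ∃ L : List E,
          IsWalk N.tail N.head v N.sink L ∧ r = (L.map (c a)).sum } <
          labelOf N f.fplus f.fminus v a + ε := by
        unfold labelOf
        exact lt_add_of_pos_right _ hε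
      obtain ⟨r, ⟨W, hW, rfl⟩, hrlt⟩ := exists_lt_of_csInf_lt (hneS a) hlt
      obtain ⟨W', hnd, hw', hle'⟩ :=
        exists_nodup_walk_le (c a) (fun e => ctime_nonneg N f hf e a ha)
          W.length v N.sink W le_rfl hW
      have h1 : labelOf N f.fplus f.fminus v b ≤ (W'.map (c b)).sum := by
        unfold labelOf
        exact csInf_le (hbddS b hb) ⟨W', hw', rfl⟩
      have h2 : (W'.map (c b)).sum ≤
          (W'.map (c a)).sum + (W'.map K).sum * |b - a| := by
        rw [← List.sum_map_mul_right, ← List.sum_map_add]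
        apply List.sum_le_sum
        intro e _
        have hcl := ctime_lip N f hf e b a hb ha
        have habs := abs_le.mp hcl
        simp only [hc, hK]
        nlinarith [habs.1, habs.2, abs_nonneg (b - a)]
      have h3 : (W'.map K).sum ≤ ∑ e : E, K e := by
        rw [← List.sum_toFinset K hnd]
        exact Finset.sum_le_sum_of_subset_of_nonneg (Finset.subset_univ _)
          (fun i _ _ => hK0 i)
      have h4 : (W'.map K).sum * |b - a| ≤ (∑ e : E, K e) * |b - a| :=
        mul_le_mul_of_nonneg_right h3 (abs_nonneg _)
      linarith
    have hba := main θ' θ hθ' hθ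
    have hab := main θ θ' hθ hθ'
    rw [abs_sub_comm] at hab
    rw [abs_le]
    constructor <;> linarith
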